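/- For every real number x > 0 and every real number A > 1, one has (2/x) · log( (e^(x/2) + A) / (e^(−x/2) + A) ) > 1/A. -/

import Mathlib

open Real

private lemma deriv_pos_aux (A u v : ℝ) (hA : 1 < A) (hu : 0 < u) (hv : 0 < v)
    (huv : u * v = 1) :
    0 < u * (1 / 2) / (u + A) - v * (-(1 / 2)) / (v + A) - 1 / (2 * A) := by
  have hA0 : (0:ℝ) < A := by linarith
  have h1 : 0 < u + A := by linarith
  have h2 : 0 < v + A := by linarith
  have e : u * (1 / 2) / (u + A) - v * (-(1 / 2)) / (v + A) - 1 / (2 * A)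
      = (u * A * (v + A) + v * A * (u + A) - (u + A) * (v + A)) / (2 * A * (u + A) * (v + A)) := by
    field_simp
    ring
  rw [e]
  apply div_pos _ (by positivity)
  have hs : 2 ≤ u + v := by nlinarith [mul_nonneg (sq_nonneg (u - 1)) hv.le]
  nlinarith [mul_nonneg (sub_nonneg.2 hA.le) (by linarith : (0:ℝ) ≤ u + v - 2), sq_nonneg (A - 1)]

theorem gap_log_lower_bound (x A : ℝ) (hx : 0 < x) (hA : 1 < A) :
    (2 / x) * Real.log ((Real.exp (x / 2) + A) / (Real.exp (-x / 2) + A)) > 1 / A := by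
  have hA0 : (0:ℝ) < A := by linarith
  set f : ℝ → ℝ := fun y => Real.log (Real.exp (y / 2) + A) - Real.log (Real.exp (-y / 2) + A)
    - y / (2 * A) with hf
  have hderiv : ∀ y : ℝ, HasDerivAt f
      (Real.exp (y / 2) * (1 / 2) / (Real.exp (y / 2) + A)
        - Real.exp (-y / 2) * (-(1 / 2)) / (Real.exp (-y / 2) + A) - 1 / (2 * A)) y := by
    intro y
    have p1 : (0:ℝ) < Real.exp (y / 2) + A := by positivity
    have p2 : (0:ℝ) < Real.exp (-y / 2) + A := by positivity
    have h1 : HasDerivAt (fun z : ℝ => Real.log (Real.exp (z / 2) + A))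
        (Real.exp (y / 2) * (1 / 2) / (Real.exp (y / 2) + A)) y :=
      (((hasDerivAt_id y).div_const 2).exp.add_const A).log (ne_of_gt p1)
    have h2 : HasDerivAt (fun z : ℝ => Real.log (Real.exp (-z / 2) + A))
        (Real.exp (-y / 2) * (-(1 / 2)) / (Real.exp (-y / 2) + A)) y := by
      have := ((((hasDerivAt_id y).neg).div_const 2).exp.add_const A).log (ne_of_gt p2)
      simpa [neg_div] using this
    have h3 : HasDerivAt (fun z : ℝ => z / (2 * A)) (1 / (2 * A)) y :=
      (hasDerivAt_id y).div_const (2 * A)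
    exact (h1.sub h2).sub h3
  have hmono : StrictMono f := by
    apply strictMono_of_deriv_pos
    intro y
    rw [(hderiv y).deriv]
    exact deriv_pos_aux A (Real.exp (y / 2)) (Real.exp (-y / 2)) hA (Real.exp_pos _)
      (Real.exp_pos _) (by rw [← Real.exp_add, show y / 2 + -y / 2 = 0 by ring, Real.exp_zero])
  have h0 : f 0 = 0 := by simp [hf]
  have hfx : 0 < f x := h0 ▸ hmono hx
  have hlog : Real.log ((Real.exp (x / 2) + A) / (Real.exp (-x / 2) + A))
      = Real.log (Real.exp (x / 2) + A) - Real.log (Real.exp (-x / 2) + A) :=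
    Real.log_div (by positivity) (by positivity)
  have key : x / (2 * A) < Real.log (Real.exp (x / 2) + A) - Real.log (Real.exp (-x / 2) + A) := by
    have h := hfx
    simp only [hf] at h
    linarith
  rw [hlog, gt_iff_lt]
  have h2x : (0:ℝ) < 2 / x := by positivity
  calc 1 / A = (2 / x) * (x / (2 * A)) := by field_simp
    _ < (2 / x) * (Real.log (Real.exp (x / 2) + A) - Real.log (Real.exp (-x / 2) + A)) :=
        by exact mul_lt_mul_of_pos_left key h2x
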